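/- Let X = x_1x_2⋯x_D be a vertex of Γ_Δ(D) with x_1 = 1, let Y = 12⋯D, and suppose d(X,Y) = k. For 2 ≤ i ≤ Δ+1, let X_i = i∘X be the out-neighbor of X with first letter i, and let Y_i be: 23⋯i 1 (i+1)⋯D if 2 ≤ i ≤ D, and 23⋯D i if D < i ≤ Δ+1. Then d(X_i,Y_i) = k if 1 < i < k; d(X_i,Y_i) = k−2 if i = k; d(X_i,Y_i) = i−2 if k < i ≤ D; and d(X_i,Y_i) = D−1 if i > D. -/

import Mathlib

/-- `l` is a vertex of the cycle prefix digraph `Γ_Δ(D)`: a sequence of `D`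
distinct letters from the alphabet `{1, …, Δ+1}`. -/
def IsVtx (Δ D : ℕ) (l : List ℕ) : Prop :=
  l.length = D ∧ l.Nodup ∧ ∀ x ∈ l, 1 ≤ x ∧ x ≤ Δ + 1

/-- Adjacency in `Γ_Δ(D, -r)` (for `r = 0` this is `Γ_Δ(D)` itself): arcs are the
rotations `R_k` for `r+2 ≤ k ≤ D` (0-indexed: move the letter at index `j`,
`r+1 ≤ j ≤ D-1`, to the front) and the shifts `S_y` for letters `y` not in the
sequence. -/
def adjR (Δ D r : ℕ) (X Y : List ℕ) : Prop :=
  IsVtx Δ D X ∧ IsVtx Δ D Y ∧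
    ((∃ j, r + 1 ≤ j ∧ j < D ∧ Y = X.getD j 0 :: X.eraseIdx j) ∨
     (∃ y, y ∉ X ∧ Y = y :: X.dropLast))

/-- `w` is a directed walk of length `n` from `u` to `v` in the digraph with
adjacency relation `A`. -/
def IsWalk {V : Type*} (A : V → V → Prop) (u v : V) (n : ℕ) (w : ℕ → V) : Prop :=
  w 0 = u ∧ w n = v ∧ ∀ i < n, A (w i) (w (i + 1))

/-- Directed distance: the least length of a directed walk from `u` to `v`. -/
noncomputable def cpDist {V : Type*} (A : V → V → Prop) (u v : V) : ℕ :=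
  sInf {n | ∃ w, IsWalk A u v n w}

/-- `i ∘ X`: the out-neighbor of `X` beginning with the letter `i`. -/
def comp (i : ℕ) (X : List ℕ) : List ℕ :=
  if i ∈ X then i :: X.erase i else i :: X.dropLast

/-- The in-neighbor `Y_i` of `Y = 12⋯D`: `2 3 ⋯ i 1 (i+1) ⋯ D` for `2 ≤ i ≤ D`,
and `2 3 ⋯ D i` for `D < i`. -/
def Yi (D i : ℕ) : List ℕ :=
  if i ≤ D then List.range' 2 (i - 1) ++ 1 :: List.range' (i + 1) (D - i)
  else List.range' 2 (D - 1) ++ [i]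

namespace CPD

/-- one greedy step: erase the letter `c` if present, else drop the last letter. -/
def stp (L : List ℕ) (c : ℕ) : List ℕ := if c ∈ L then L.erase c else L.dropLast

/-- run a schedule of greedy steps. -/
def run (L : List ℕ) (s : List ℕ) : List ℕ := s.foldl stp L

/-- the schedule `[a, a-1, ..., b]`. -/
def sd (a b : ℕ) : List ℕ := (List.range' b (a + 1 - b)).reverse

@[simp] lemma run_nil (L : List ℕ) : run L [] = L := rfl

lemma run_cons (L : List ℕ) (c : ℕ) (s : List ℕ) : run L (c :: s) = run (stp L c) s := rfl

lemma run_append (L : List ℕ) (s t : List ℕ) : run L (s ++ t) = run (run L s) t :=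
  List.foldl_append

lemma stp_sublist (L : List ℕ) (c : ℕ) : (stp L c).Sublist L := by
  unfold stp; split
  · exact List.erase_sublist
  · exact List.dropLast_sublist _

lemma run_sublist (s : List ℕ) : ∀ L, (run L s).Sublist L := by
  induction s with
  | nil => intro L; simp
  | cons c s ih => intro L; exact (ih (stp L c)).trans (stp_sublist L c)

lemma run_nodup {L : List ℕ} (s : List ℕ) (h : L.Nodup) : (run L s).Nodup :=
  (run_sublist s L).nodup h

lemma length_stp (L : List ℕ) (c : ℕ) : (stp L c).length = L.length - 1 := by
  unfold stp; split
  · exact List.length_erase_of_mem ‹_›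
  · simp [List.length_dropLast]

lemma length_run (s : List ℕ) : ∀ L, (run L s).length = L.length - s.length := by
  induction s with
  | nil => intro L; simp
  | cons c s ih =>
    intro L
    rw [run_cons, ih, length_stp, List.length_cons, Nat.sub_sub, Nat.add_comm]

lemma not_mem_stp {L : List ℕ} (h : L.Nodup) (c : ℕ) : c ∉ stp L c := by
  unfold stp; split
  · exact h.not_mem_erase
  · intro hc; exact ‹c ∉ L› ((List.dropLast_sublist L).subset hc)

lemma not_mem_run {L : List ℕ} {c : ℕ} {s : List ℕ} (hc : c ∈ s) (h : L.Nodup) :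
    c ∉ run L s := by
  induction s generalizing L with
  | nil => simp at hc
  | cons d s ih =>
    rw [run_cons]
    rcases List.mem_cons.1 hc with rfl | hc
    · by_cases hs : c ∈ s
      · exact ih hs ((stp_sublist L c).nodup h)
      · intro hmem
        exact not_mem_stp h c ((run_sublist s _).subset hmem)
    · exact ih hc ((stp_sublist L d).nodup h)

lemma stp_cons {M : List ℕ} {x c : ℕ} (hxc : c ≠ x) (hM : M ≠ []) :
    stp (x :: M) c = x :: stp M c := by
  unfold stp
  have : (c ∈ x :: M) ↔ c ∈ M := by simp [hxc]
  by_cases h : c ∈ M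
  · rw [if_pos (this.2 h), if_pos h, List.erase_cons_tail (by simp [hxc.symm])]
  · rw [if_neg (fun hh => h (this.1 hh)), if_neg h, List.dropLast_cons_of_ne_nil hM]

/-- spectator head: a head not scheduled stays in front. -/
lemma run_cons_spectator {x : ℕ} : ∀ (s : List ℕ) (M : List ℕ), x ∉ s →
    s.length ≤ M.length → run (x :: M) s = x :: run M s := by
  intro s
  induction s with
  | nil => intros; simp
  | cons c s ih =>
    intro M hx hlen
    have hxc : c ≠ x := fun h => hx (by simp [h])
    have hM : M ≠ [] := by
      intro h; subst h; simp at hlen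
    rw [run_cons, stp_cons hxc hM, run_cons, ih _ (fun h => hx (by simp [h]))]
    rw [length_stp]
    simp only [List.length_cons] at hlen
    omega

lemma mem_sd {x a b : ℕ} : x ∈ sd a b ↔ b ≤ x ∧ x ≤ a := by
  unfold sd
  rw [List.mem_reverse, List.mem_range'_1]
  omega

lemma length_sd (a b : ℕ) : (sd a b).length = a + 1 - b := by
  simp [sd]

lemma sd_self (t : ℕ) : sd t (t + 1) = [] := by simp [sd]

/-- `sd a b = sd a (c+1) ++ sd c b` for `b ≤ c+1`, `c ≤ a`. -/
lemma sd_split {a b c : ℕ} (hbc : b ≤ c + 1) (hca : c ≤ a) :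
    sd a b = sd a (c + 1) ++ sd c b := by
  unfold sd
  rw [← List.reverse_append]
  congr 1
  have := List.range'_append (s := b) (m := c + 1 - b) (n := a - c) (step := 1)
  simp only [one_mul, Nat.mul_one] at this
  rw [show b + (c + 1 - b) = c + 1 by omega] at this
  rw [show a + 1 - (c + 1) = a - c by omega, show a + 1 - b = (c + 1 - b) + (a - c) by omega]
  exact this.symm

lemma sd_cons {a b : ℕ} (hb : 1 ≤ b) (h : b ≤ a) : sd a b = a :: sd (a - 1) b := by
  unfold sd
  rw [show a + 1 - b = (a - b) + 1 by omega, List.range'_1_concat, List.reverse_append]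
  simp only [List.reverse_cons, List.reverse_nil, List.nil_append, List.singleton_append]
  rw [show b + (a - b) = a by omega, show (a-1) + 1 - b = a - b by omega]

lemma sd_singleton {c : ℕ} (hc : 1 ≤ c) : sd c c = [c] := by
  rw [sd_cons hc le_rfl]
  have : sd (c-1) c = [] := by unfold sd; rw [show c - 1 + 1 - c = 0 by omega]; rfl
  rw [this]

/-- `sd a b = sd a (c+1) ++ c :: sd (c-1) b` for `b ≤ c ≤ a`. -/
lemma sd_split_mid {a b c : ℕ} (hb : 1 ≤ b) (hbc : b ≤ c) (hca : c ≤ a) :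
    sd a b = sd a (c + 1) ++ c :: sd (c - 1) b := by
  rw [sd_split (by omega) hca, sd_cons hb hbc]


/-- helper: erasing a non-last element commutes with dropLast. -/
lemma dropLast_erase {L : List ℕ} {x : ℕ} (hnd : L.Nodup) (hx : x ∈ L.dropLast) :
    (L.erase x).dropLast = L.dropLast.erase x := by
  rcases List.eq_nil_or_concat L with rfl | ⟨l₁, e, rfl⟩
  · simp at hx
  · rw [List.concat_eq_append] at *
    rw [List.dropLast_concat] at hx ⊢
    have hxe : x ≠ e := by
      rintro rfl
      rw [List.nodup_append] at hnd
      exact hnd.2.2 x hx x (by simp) rfl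
    rw [List.erase_append_left _ hx, List.dropLast_concat]

/-- commutation of a step with erasing a surviving spectator. -/
lemma stp_erase_comm {L : List ℕ} {x c : ℕ} (hnd : L.Nodup) (hxc : c ≠ x)
    (hx : x ∈ stp L c) : stp (L.erase x) c = (stp L c).erase x := by
  by_cases hc : c ∈ L
  · have hc' : c ∈ L.erase x := (List.mem_erase_of_ne hxc).2 hc
    rw [stp, if_pos hc', stp, if_pos hc, List.erase_comm]
  · have hc' : c ∉ L.erase x := fun h => hc ((List.erase_sublist (a := x) (l := L)).subset h)
    rw [stp, if_neg hc', stp, if_neg hc]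
    rw [stp, if_neg hc] at hx
    exact dropLast_erase hnd hx

/-- (K1) erasing a letter that is never scheduled and survives commutes with the run. -/
lemma run_erase_of_surv {x : ℕ} : ∀ (s : List ℕ) (L : List ℕ), L.Nodup → x ∉ s →
    x ∈ run L s → run (L.erase x) s = (run L s).erase x := by
  intro s
  induction s with
  | nil => intros; simp
  | cons c s ih =>
    intro L hnd hxs hxr
    have hxc : c ≠ x := fun h => hxs (by simp [h])
    rw [run_cons] at hxr
    have hx : x ∈ stp L c := (run_sublist s _).subset hxr
    rw [run_cons, run_cons, stp_erase_comm hnd hxc hx,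
      ih _ ((stp_sublist L c).nodup hnd) (fun h => hxs (by simp [h])) hxr]

/-- (K4) dropping the last element commutes with any run. -/
lemma stp_dropLast {L : List ℕ} (hnd : L.Nodup) (c : ℕ) :
    stp L.dropLast c = (stp L c).dropLast := by
  rcases List.eq_nil_or_concat L with rfl | ⟨l₁, e, rfl⟩
  · simp [stp]
  · rw [List.concat_eq_append, List.dropLast_concat]
    by_cases h1 : c ∈ l₁
    · have hce : c ∈ l₁ ++ [e] := by simp [h1]
      rw [stp, if_pos h1, stp, if_pos hce, List.erase_append_left _ h1, List.dropLast_concat]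
    · by_cases h2 : c = e
      · subst h2
        have hce : c ∈ l₁ ++ [c] := by simp
        rw [stp, if_neg h1, stp, if_pos hce, List.erase_append_right _ h1,
          List.erase_cons_head, List.append_nil]
      · have hce : c ∉ l₁ ++ [e] := by simp [h1, h2]
        rw [stp, if_neg h1, stp, if_neg hce, List.dropLast_concat]

lemma run_dropLast : ∀ (s : List ℕ) (L : List ℕ), L.Nodup →
    run L.dropLast s = (run L s).dropLast := by
  intro s
  induction s with
  | nil => intros; simp
  | cons c s ih =>
    intro L hnd
    rw [run_cons, run_cons, stp_dropLast hnd, ih _ ((stp_sublist L c).nodup hnd)]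

/-- (K3) inserting a step `x ∉ M` in the middle equals pre-dropping the last element. -/
lemma run_mid_not_mem {M : List ℕ} {x : ℕ} {s₁ s₂ : List ℕ} (hnd : M.Nodup)
    (hx : x ∉ M) (hxs : x ∉ s₁) : run M (s₁ ++ x :: s₂) = run M.dropLast (s₁ ++ s₂) := by
  rw [run_append, run_cons]
  have hx1 : x ∉ run M s₁ := fun h => hx ((run_sublist s₁ M).subset h)
  rw [show stp (run M s₁) x = (run M s₁).dropLast from by rw [stp, if_neg hx1]]
  rw [← run_dropLast s₁ M hnd, ← run_append]

/-- (K2) inserting a step `x ∈ L` in the middle equals pre-erasing `x`. -/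
lemma run_mid_erase {x : ℕ} : ∀ (s₁ : List ℕ) (L : List ℕ) (s₂ : List ℕ), L.Nodup →
    x ∈ L → x ∉ s₁ → run L (s₁ ++ x :: s₂) = run (L.erase x) (s₁ ++ s₂) := by
  intro s₁
  induction s₁ with
  | nil =>
    intro L s₂ hnd hx _
    rw [List.nil_append, List.nil_append, run_cons, stp, if_pos hx]
  | cons c s₁ ih =>
    intro L s₂ hnd hx hxs
    have hxc : c ≠ x := fun h => hxs (by simp [h])
    have hxs' : x ∉ s₁ := fun h => hxs (by simp [h])
    rw [List.cons_append, run_cons, List.cons_append, run_cons]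
    by_cases hsurv : x ∈ stp L c
    · rw [ih _ _ ((stp_sublist L c).nodup hnd) hsurv hxs', stp_erase_comm hnd hxc hsurv]
    · -- x was dropped: c ∉ L and x is the last element of L
      have hcL : c ∉ L := by
        intro hcL
        apply hsurv
        rw [stp, if_pos hcL]
        exact (List.mem_erase_of_ne (fun h => hxc h.symm)).2 hx
      rw [stp, if_neg hcL] at hsurv ⊢
      rcases List.eq_nil_or_concat L with rfl | ⟨l₁, e, rfl⟩
      · simp at hx
      · rw [List.concat_eq_append] at *
        rw [List.dropLast_concat] at hsurv ⊢
        have hxe : x = e := by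
          rcases List.mem_append.1 hx with h | h
          · exact absurd h hsurv
          · simpa using h
        subst hxe
        have hxl : x ∉ l₁ := hsurv
        have hcl1 : c ∉ l₁ := fun h => hcL (by simp [h])
        rw [List.erase_append_right _ hxl, List.erase_cons_head, List.append_nil]
        rw [run_mid_not_mem (hnd.sublist (by simp)) hxl hxs']
        rw [show stp l₁ c = l₁.dropLast from by rw [stp, if_neg hcl1]]


/-- the greedy run with schedule `t, t-1, ..., 1`. -/
def G (W : List ℕ) (t : ℕ) : List ℕ := run W (sd t 1)

/-- `W` reaches `1 2 ... D` canonically in `t` steps. -/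
def ok (D : ℕ) (W : List ℕ) (t : ℕ) : Prop :=
  G W t = List.range' (t + 1) (D - t) ∧ (t = 0 ∨ W.headI ≠ t)

noncomputable def phi (D : ℕ) (W : List ℕ) : ℕ := sInf {t | ok D W t}

lemma sd_zero : sd 0 1 = [] := by unfold sd; rfl

@[simp] lemma G_zero (W : List ℕ) : G W 0 = W := by rw [G, sd_zero, run_nil]

lemma G_succ (W : List ℕ) (t : ℕ) : G W (t + 1) = run (stp W (t + 1)) (sd t 1) := by
  rw [G, sd_cons (by omega) (by omega), Nat.add_sub_cancel, run_cons]

lemma length_G (W : List ℕ) (t : ℕ) : (G W t).length = W.length - t := by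
  rw [G, length_run, length_sd]; omega

/-- every list of length `D` has an `ok` time `≤ D`. -/
lemma ok_exists {D : ℕ} {W : List ℕ} (hlen : W.length = D) :
    ∃ t, t ≤ D ∧ ok D W t := by
  by_cases h : D ≠ 0 ∧ W.headI = D
  · obtain ⟨hD, hh⟩ := h
    obtain ⟨x, M, rfl⟩ : ∃ x M, W = x :: M := by
      cases W with
      | nil => simp at hlen; omega
      | cons a l => exact ⟨a, l, rfl⟩
    have hx : x = D := hh
    have hlM : M.length = D - 1 := by simp at hlen; omega
    refine ⟨D - 1, by omega, ?_, Or.inr (by simp only [List.headI]; omega)⟩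
    rw [G, run_cons_spectator _ _ (fun hmem => by
        have := mem_sd.1 hmem; omega) (by rw [length_sd, hlM]; omega)]
    have hz : (run M (sd (D-1) 1)).length = 0 := by
      rw [length_run, length_sd, hlM]; omega
    rw [List.length_eq_zero_iff.1 hz, show D - (D - 1) = 1 by omega,
      show D - 1 + 1 = D by omega]
    rw [List.range'_succ]
    simp [hx]
  · refine ⟨D, le_rfl, ?_, ?_⟩
    · have hz : (G W D).length = 0 := by rw [length_G, hlen]; omega
      rw [List.length_eq_zero_iff.1 hz, Nat.sub_self]
      rfl
    · by_cases hD : D = 0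
      · exact Or.inl hD
      · exact Or.inr (fun hh => h ⟨hD, hh⟩)

lemma phi_le_D {D : ℕ} {W : List ℕ} (hlen : W.length = D) : phi D W ≤ D := by
  obtain ⟨t, ht, hok⟩ := ok_exists hlen
  exact le_trans (Nat.sInf_le hok) ht

lemma ok_phi {D : ℕ} {W : List ℕ} (hlen : W.length = D) : ok D W (phi D W) := by
  obtain ⟨t, _, hok⟩ := ok_exists hlen
  have hne : {u | ok D W u}.Nonempty := ⟨t, hok⟩
  exact Nat.sInf_mem hne

/-- endgame: from a successful greedy run at time `t < D`, get `ok` at `t` or `t+1`. -/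
lemma ok_of_G {D : ℕ} {W : List ℕ} {t : ℕ} (hnd : W.Nodup) (hlen : W.length = D)
    (hG : G W t = List.range' (t + 1) (D - t)) (htD : t < D) :
    ∃ u, u ≤ t + 1 ∧ ok D W u := by
  by_cases hh : t = 0 ∨ W.headI ≠ t
  · exact ⟨t, by omega, hG, hh⟩
  · push_neg at hh
    obtain ⟨ht0, hhead⟩ := hh
    refine ⟨t + 1, le_rfl, ?_, Or.inr (by rw [hhead]; omega)⟩
    have hmem : t + 1 ∈ G W t := by
      rw [hG, List.mem_range'_1]; omega
    have hmemW : t + 1 ∈ W := (run_sublist _ _).subset hmem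
    have hns : t + 1 ∉ sd t 1 := fun h => by have := mem_sd.1 h; omega
    rw [G_succ, show stp W (t+1) = W.erase (t+1) from by rw [stp, if_pos hmemW],
      run_erase_of_surv _ _ hnd hns hmem]
    rw [G] at hG
    rw [hG, show D - t = (D - (t+1)) + 1 by omega, List.range'_succ, List.erase_cons_head]

/-- the greedy run of `X = 1 :: T` acts on the tail. -/
lemma G_one_cons {D : ℕ} {T : List ℕ} {t : ℕ} (hT : T.length = D - 1) (h1 : 1 ≤ t)
    (htD : t ≤ D) : G ((1 : ℕ) :: T) t = run T (sd t 2) := by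
  have hsplit : sd t 1 = sd t 2 ++ [1] := by
    rw [sd_split_mid (le_refl 1) (le_refl 1) h1, sd_zero]
  rw [G, hsplit, run_append,
    run_cons_spectator _ _ (fun hm => by have := mem_sd.1 hm; omega)
      (by rw [length_sd, hT]; omega)]
  rw [run_cons, run_nil, show stp (1 :: run T (sd t 2)) 1 = run T (sd t 2) from by
    rw [stp, if_pos (by simp), List.erase_cons_head]]

/-- monotone step: success at `m < D` gives success at `m+1`. -/
lemma G_mono_step {D : ℕ} {X : List ℕ} {m : ℕ} (hnd : X.Nodup)
    (hG : G X m = List.range' (m + 1) (D - m)) (hmD : m < D) :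
    G X (m + 1) = List.range' (m + 2) (D - (m + 1)) := by
  have hmem : m + 1 ∈ G X m := by rw [hG, List.mem_range'_1]; omega
  have hmemX : m + 1 ∈ X := (run_sublist _ _).subset hmem
  have hns : m + 1 ∉ sd m 1 := fun h => by have := mem_sd.1 h; omega
  rw [G_succ, show stp X (m+1) = X.erase (m+1) from by rw [stp, if_pos hmemX],
    run_erase_of_surv _ _ hnd hns hmem]
  rw [G] at hG
  rw [hG, show D - m = (D - (m+1)) + 1 by omega, List.range'_succ, List.erase_cons_head]

lemma G_mono {D : ℕ} {X : List ℕ} {k : ℕ} (hnd : X.Nodup)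
    (hG : G X k = List.range' (k + 1) (D - k)) :
    ∀ m, k ≤ m → m ≤ D → G X m = List.range' (m + 1) (D - m) := by
  intro m hkm
  induction m, hkm using Nat.le_induction with
  | base => intro _; exact hG
  | succ n hn ih => intro hnD; exact G_mono_step hnd (ih (by omega)) (by omega)


lemma headI_mem {W : List ℕ} (h : W ≠ []) : W.headI ∈ W := by
  cases W with
  | nil => exact absurd rfl h
  | cons a l => simp

lemma getD_mem {W : List ℕ} {j : ℕ} (h : j < W.length) : W.getD j 0 ∈ W := by
  rw [List.getD_eq_getElem _ _ h]
  exact List.getElem_mem h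

lemma erase_getD : ∀ (W : List ℕ) (j : ℕ), W.Nodup → j < W.length →
    W.erase (W.getD j 0) = W.eraseIdx j := by
  intro W
  induction W with
  | nil => intro j _ h; simp at h
  | cons x W' ih =>
    intro j hnd hj
    cases j with
    | zero => simp [List.erase_cons_head]
    | succ j =>
      have hj' : j < W'.length := by simp at hj; omega
      have hc : W'.getD j 0 ∈ W' := getD_mem hj'
      have hx : x ∉ W' := (List.nodup_cons.1 hnd).1
      have hxc : x ≠ W'.getD j 0 := fun h => hx (h ▸ hc)
      rw [List.getD_cons_succ, List.erase_cons_tail (by simp only [beq_iff_eq]; exact hxc),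
        ih j (List.nodup_cons.1 hnd).2 hj', List.eraseIdx_cons_succ]

lemma headI_ne_getD {W : List ℕ} {j : ℕ} (hnd : W.Nodup) (h1 : 1 ≤ j)
    (h2 : j < W.length) : W.headI ≠ W.getD j 0 := by
  cases W with
  | nil => simp at h2
  | cons x W' =>
    have hj' : j - 1 < W'.length := by simp at h2; omega
    have : (x :: W').getD j 0 = W'.getD (j-1) 0 := by
      cases j with
      | zero => omega
      | succ j => simp
    rw [this]
    intro h
    simp only [List.headI] at h
    exact (List.nodup_cons.1 hnd).1 (h ▸ getD_mem hj')

/-- the local lemma: along an arc, `phi` decreases by at most one. -/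
lemma phi_le_succ {Δ D : ℕ} {W W' : List ℕ} (h : adjR Δ D 0 W W') :
    phi D W ≤ phi D W' + 1 := by
  obtain ⟨hW, hW', harc⟩ := h
  obtain ⟨hlW, hndW, hbW⟩ := hW
  obtain ⟨hlW', hndW', hbW'⟩ := hW'
  obtain ⟨hG', hhd'⟩ := ok_phi hlW'
  set t' := phi D W' with ht'def
  by_cases htD : D ≤ t'
  · exact le_trans (phi_le_D hlW) (by omega)
  push_neg at htD
  have hD1 : 1 ≤ D := by omega
  obtain ⟨c, M, hW'eq⟩ : ∃ c M, W' = c :: M := by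
    cases W' with
    | nil => simp at hlW'; omega
    | cons a l => exact ⟨a, l, rfl⟩
  have hMlen : M.length = D - 1 := by rw [hW'eq] at hlW'; simp at hlW'; omega
  have hstp : stp W c = M ∧ W.headI ≠ c := by
    rcases harc with ⟨j, hj1, hjD, heq⟩ | ⟨y, hy, heq⟩
    · rw [hW'eq] at heq
      have hcj : c = W.getD j 0 := (List.cons.injEq _ _ _ _ ▸ heq).1
      have hMj : M = W.eraseIdx j := (List.cons.injEq _ _ _ _ ▸ heq).2
      have hcW : c ∈ W := hcj ▸ getD_mem (by omega)
      constructor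
      · rw [stp, if_pos hcW, hcj, erase_getD W j hndW (by omega), hMj]
      · rw [hcj]; exact headI_ne_getD hndW hj1 (by omega)
    · rw [hW'eq] at heq
      have hcy : c = y := (List.cons.injEq _ _ _ _ ▸ heq).1
      have hMd : M = W.dropLast := (List.cons.injEq _ _ _ _ ▸ heq).2
      have hcW : c ∉ W := hcy ▸ hy
      constructor
      · rw [stp, if_neg hcW, hMd]
      · intro hh; exact hcW (hh ▸ headI_mem (by intro hn; rw [hn] at hlW; simp at hlW; omega))
  obtain ⟨hstpW, hhdW⟩ := hstp
  have hMsubW : M.Sublist W := hstpW ▸ stp_sublist W c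
  rcases Nat.eq_zero_or_pos t' with ht0 | ht1
  · -- t' = 0 : W' = range' 1 D
    rw [ht0] at hG' ⊢
    simp only [Nat.sub_zero, G_zero] at hG'
    rw [show (0:ℕ) + 1 = 1 by rfl] at hG'
    rw [hW'eq, show D = (D - 1) + 1 by omega, List.range'_succ] at hG'
    injection hG' with hc1 hM1
    subst hc1
    have hok : ok D W 1 := by
      constructor
      · rw [G, sd_singleton (le_refl 1), run_cons, run_nil, hstpW, hM1]
      · exact Or.inr hhdW
    exact le_trans (Nat.sInf_le hok) (by omega)
  · have hct' : c ≠ t' := by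
      rcases hhd' with h0 | hne
      · omega
      · rw [hW'eq] at hne; exact fun hh => hne (hh ▸ rfl)
    by_cases hclt : t' < c
    · -- case A : c = t' + 1
      have hspec : G W' t' = c :: run M (sd t' 1) := by
        rw [hW'eq, G, run_cons_spectator _ _ (fun hm => by have := mem_sd.1 hm; omega)
          (by rw [length_sd, hMlen]; omega)]
      rw [hG'] at hspec
      rw [show D - t' = (D - (t'+1)) + 1 by omega, List.range'_succ] at hspec
      injection hspec with hc1 hM1
      subst hc1
      have hok : ok D W (t' + 1) := by
        constructor
        · rw [G_succ, hstpW]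
          exact hM1.symm
        · exact Or.inr (fun hh => hhdW (by omega))
      exact Nat.sInf_le hok
    · -- case C : 1 ≤ c < t'
      have hc1 : 1 ≤ c := by
        have := hbW' c (hW'eq ▸ List.mem_cons_self (a := c) (l := M))
        omega
      have hclt' : c < t' := by omega
      have hsd : sd t' 1 = sd t' (c+1) ++ c :: sd (c-1) 1 :=
        sd_split_mid (le_refl 1) hc1 (by omega)
      have hkey : run M (sd t' (c+1) ++ sd (c-1) 1) = List.range' (t' + 1) (D - t') := by
        have h1 : G W' t' = run M (sd t' (c+1) ++ sd (c-1) 1) := by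
          rw [hW'eq, G, hsd, run_append, run_append,
            run_cons_spectator _ _ (fun hm => by have := mem_sd.1 hm; omega)
              (by rw [length_sd, hMlen]; omega),
            run_cons, show stp (c :: run M (sd t' (c+1))) c = run M (sd t' (c+1)) from by
              rw [stp, if_pos (by simp), List.erase_cons_head]]
        rw [← h1, hG']
      have hGW : G W t' = List.range' (t' + 1) (D - t') := by
        rw [G, hsd]
        by_cases hcW : c ∈ W
        · rw [run_mid_erase _ _ _ hndW hcW (fun hm => by have := mem_sd.1 hm; omega)]
          have : W.erase c = M := by rw [stp, if_pos hcW] at hstpW; exact hstpW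
          rw [this, hkey]
        · rw [run_mid_not_mem hndW hcW (fun hm => by have := mem_sd.1 hm; omega)]
          have : W.dropLast = M := by rw [stp, if_neg hcW] at hstpW; exact hstpW
          rw [this, hkey]
      obtain ⟨u, hu, hok⟩ := ok_of_G hndW hlW hGW htD
      exact le_trans (Nat.sInf_le hok) hu


lemma phi_le_walk {Δ D : ℕ} : ∀ (T : ℕ) (W : List ℕ) (w : ℕ → List ℕ),
    IsWalk (adjR Δ D 0) W (List.range' 1 D) T w → phi D W ≤ T := by
  intro T
  induction T with
  | zero =>
    intro W w ⟨h0, hT, _⟩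
    have hok : ok D W 0 := by
      constructor
      · rw [G_zero, ← h0, hT]; norm_num
      · exact Or.inl rfl
    exact Nat.sInf_le hok
  | succ T ih =>
    intro W w ⟨h0, hT, harc⟩
    have harc0 : adjR Δ D 0 W (w 1) := h0 ▸ harc 0 (by omega)
    have hwalk : IsWalk (adjR Δ D 0) (w 1) (List.range' 1 D) T (fun i => w (i + 1)) :=
      ⟨rfl, hT, fun i hi => harc (i + 1) (by omega)⟩
    exact le_trans (phi_le_succ harc0) (by have := ih _ _ hwalk; omega)

lemma eraseIdx_append_mid : ∀ (A : List ℕ) (c : ℕ) (Q : List ℕ),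
    (A ++ c :: Q).eraseIdx A.length = A ++ Q := by
  intro A
  induction A with
  | nil => intros; rfl
  | cons a A ih => intro c Q; simp only [List.cons_append, List.length_cons,
      List.eraseIdx_cons_succ, ih]

lemma exists_walk_of_ok {Δ D t : ℕ} {W : List ℕ} (hΔ : D ≤ Δ) (hV : IsVtx Δ D W)
    (hok : ok D W t) (htD : t ≤ D) :
    ∃ w, IsWalk (adjR Δ D 0) W (List.range' 1 D) t w := by
  obtain ⟨hlen, hnd, hbnd⟩ := hV
  set w : ℕ → List ℕ := fun s => List.range' (t+1-s) s ++ run W (sd t (t+1-s)) with hw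
  have hLlen : ∀ s, s ≤ t → (run W (sd t (t+1-s))).length = D - s := by
    intro s hs
    rw [length_run, length_sd, hlen]
    omega
  have hvtx : ∀ s, s ≤ t → IsVtx Δ D (w s) := by
    intro s hs
    have hsub := run_sublist (sd t (t+1-s)) W
    refine ⟨?_, ?_, ?_⟩
    · simp only [hw, List.length_append, List.length_range', hLlen s hs]
      omega
    · rw [hw]
      refine (List.nodup_append).2 ⟨List.nodup_range', run_nodup _ hnd, ?_⟩
      intro x hx
      have hx' := List.mem_range'_1.1 hx
      intro y hy hxy; subst hxy
      exact not_mem_run (mem_sd.2 (by omega)) hnd hy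
    · intro x hx
      rcases List.mem_append.1 hx with hx | hx
      · have := List.mem_range'_1.1 hx
        omega
      · exact hbnd x (hsub.subset hx)
  refine ⟨w, ?_, ?_, ?_⟩
  · show List.range' (t+1-0) 0 ++ run W (sd t (t+1-0)) = W
    rw [Nat.sub_zero, sd_self, run_nil, List.range'_zero, List.nil_append]
  · show List.range' (t+1-t) t ++ run W (sd t (t+1-t)) = List.range' 1 D
    rw [show t + 1 - t = 1 by omega]
    have h1 := hok.1
    rw [G] at h1
    rw [h1]
    have := List.range'_append (s := 1) (m := t) (n := D - t) (step := 1)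
    simp only [one_mul, Nat.mul_one] at this
    rw [show 1 + t = t + 1 by omega] at this
    rw [this, show t + (D - t) = D by omega]
  · intro s hs
    set c := t - s with hc
    have hc1 : 1 ≤ c := by omega
    have e1 : t + 1 - s = c + 1 := by omega
    have e2 : t + 1 - (s + 1) = c := by omega
    set L' := run W (sd t (c + 1)) with hL'
    have hL'len : L'.length = D - s := by
      rw [hL', length_run, length_sd, hlen]; omega
    have hL'sub : L'.Sublist W := run_sublist _ _
    have hL'nd : L'.Nodup := run_nodup _ hnd
    have hsdc : sd t c = sd t (c + 1) ++ [c] := by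
      rw [sd_split_mid hc1 (le_refl c) (by omega)]
      congr 1
      have : sd (c-1) c = [] := by unfold sd; rw [show c - 1 + 1 - c = 0 by omega]; rfl
      rw [this]
    have hws : w s = List.range' (c+1) s ++ L' := by rw [hw]; simp only [e1]; rfl
    have hws1 : w (s+1) = c :: (List.range' (c+1) s ++ stp L' c) := by
      rw [hw]
      simp only [e2]
      rw [List.range'_succ, hsdc, run_append, run_cons, run_nil, List.cons_append]
    have hmemc : ∀ x, x ∈ List.range' (c+1) s → x ∉ L' := by
      intro x hx
      have := List.mem_range'_1.1 hx
      exact not_mem_run (mem_sd.2 (by omega)) hnd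
    refine ⟨hvtx s (by omega), ?_, ?_⟩
    · have := hvtx (s+1) (by omega)
      rwa [hws1, ← List.cons_append] at this ⊢
      done
    by_cases hcL : c ∈ L'
    · -- rotation
      obtain ⟨P, Q, hPQ⟩ := List.append_of_mem hcL
      have hcP : c ∉ P := by
        have := hL'nd
        rw [hPQ, List.nodup_middle] at this
        intro hh
        exact (List.nodup_cons.1 this).1 (List.mem_append.2 (Or.inl hh))
      left
      refine ⟨s + P.length, ?_, ?_, ?_⟩
      · -- 0 + 1 ≤ j
        rcases Nat.eq_zero_or_pos s with rfl | hs1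
        · have ht1 : 1 ≤ t := by omega
          have hL'W : L' = W := by
            rw [hL', show c + 1 = t + 1 by omega, sd_self, run_nil]
          have hP : P ≠ [] := by
            intro hP0
            have hhd := hok.2.resolve_left (by omega)
            apply hhd
            rw [← hL'W, hPQ, hP0, List.nil_append]
            simp only [List.headI]
            omega
          have := List.length_pos_iff.2 hP
          omega
        · omega
      · -- j < D
        have : L'.length = P.length + Q.length + 1 := by rw [hPQ]; simp; omega
        omega
      · -- shape
        rw [hws, hPQ, ← List.append_assoc]
        have hjlen : (List.range' (c+1) s ++ P).length = s + P.length := by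
          simp
        rw [← hjlen, List.getD_append_right _ _ _ _ (le_refl _), Nat.sub_self]
        rw [eraseIdx_append_mid]
        rw [hws1, show stp L' c = P ++ Q from by
          rw [stp, if_pos hcL, hPQ, List.erase_append_right _ hcP, List.erase_cons_head]]
        simp only [List.getD]
        rw [List.append_assoc]
        rfl
    · -- shift
      right
      refine ⟨c, ?_, ?_⟩
      · rw [hws]
        intro hmem
        rcases List.mem_append.1 hmem with hmem | hmem
        · have := List.mem_range'_1.1 hmem; omega
        · exact hcL hmem
      · have hL'ne : L' ≠ [] := by
          intro hh
          rw [hh] at hL'len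
          simp at hL'len
          omega
        rw [hws, List.dropLast_append_of_ne_nil hL'ne, hws1,
          show stp L' c = L'.dropLast from by rw [stp, if_neg hcL]]

/-- MASTER THEOREM: distance to `1 2 ... D` equals the greedy time `phi`. -/
theorem dist_eq_phi {Δ D : ℕ} (hΔ : D ≤ Δ) {W : List ℕ} (hV : IsVtx Δ D W) :
    cpDist (adjR Δ D 0) W (List.range' 1 D) = phi D W := by
  obtain ⟨w₀, hw₀⟩ := exists_walk_of_ok hΔ hV (ok_phi hV.1) (phi_le_D hV.1)
  apply le_antisymm
  · exact Nat.sInf_le ⟨w₀, hw₀⟩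
  · have hne : {n | ∃ w, IsWalk (adjR Δ D 0) W (List.range' 1 D) n w}.Nonempty :=
      ⟨phi D W, w₀, hw₀⟩
    obtain ⟨w, hw⟩ := Nat.sInf_mem hne
    exact phi_le_walk _ _ _ hw


section Automorphism

variable {Δ D : ℕ} {f : ℕ → ℕ}

def AlphMap (Δ : ℕ) (f : ℕ → ℕ) : Prop :=
  (∀ x, 1 ≤ x → x ≤ Δ + 1 → 1 ≤ f x ∧ f x ≤ Δ + 1) ∧
  (∀ x y, 1 ≤ x → x ≤ Δ + 1 → 1 ≤ y → y ≤ Δ + 1 → f x = f y → x = y)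

lemma vtx_map (hf : AlphMap Δ f) {X : List ℕ} (hX : IsVtx Δ D X) :
    IsVtx Δ D (X.map f) := by
  obtain ⟨hlen, hnd, hbnd⟩ := hX
  refine ⟨by simp [hlen], ?_, ?_⟩
  · refine hnd.map_on ?_
    intro x hx y hy hxy
    obtain ⟨hx1, hx2⟩ := hbnd x hx
    obtain ⟨hy1, hy2⟩ := hbnd y hy
    exact hf.2 x y hx1 hx2 hy1 hy2 hxy
  · intro x hx
    obtain ⟨a, ha, rfl⟩ := List.mem_map.1 hx
    obtain ⟨h1, h2⟩ := hbnd a ha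
    exact hf.1 a h1 h2

lemma map_eraseIdx (g : ℕ → ℕ) : ∀ (X : List ℕ) (j : ℕ),
    (X.eraseIdx j).map g = (X.map g).eraseIdx j := by
  intro X
  induction X with
  | nil => intro j; rfl
  | cons x X ih =>
    intro j
    cases j with
    | zero => rfl
    | succ j => simp only [List.eraseIdx_cons_succ, List.map_cons, ih]

lemma adj_map (hf : AlphMap Δ f) {X Y : List ℕ} (h : adjR Δ D 0 X Y) :
    adjR Δ D 0 (X.map f) (Y.map f) := by
  obtain ⟨hX, hY, harc⟩ := h
  refine ⟨vtx_map hf hX, vtx_map hf hY, ?_⟩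
  rcases harc with ⟨j, hj1, hjD, heq⟩ | ⟨y, hy, heq⟩
  · left
    refine ⟨j, hj1, hjD, ?_⟩
    rw [heq, List.map_cons, map_eraseIdx]
    congr 1
    have hjX : j < X.length := by rw [hX.1]; omega
    have hjX' : j < (X.map f).length := by simp [hX.1]; omega
    rw [List.getD_eq_getElem _ _ hjX, List.getD_eq_getElem _ _ hjX', List.getElem_map]
  · right
    refine ⟨f y, ?_, ?_⟩
    · intro hmem
      obtain ⟨a, ha, hfa⟩ := List.mem_map.1 hmem
      obtain ⟨ha1, ha2⟩ := hX.2.2 a ha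
      have hy1 : 1 ≤ y ∧ y ≤ Δ + 1 := hY.2.2 y (heq ▸ List.mem_cons_self (a := y))
      exact hy ((hf.2 a y ha1 ha2 hy1.1 hy1.2 hfa) ▸ ha)
    · rw [heq, List.map_cons, List.map_dropLast]

lemma walk_map (hf : AlphMap Δ f) {u v : List ℕ} {n : ℕ} {w : ℕ → List ℕ}
    (h : IsWalk (adjR Δ D 0) u v n w) :
    IsWalk (adjR Δ D 0) (u.map f) (v.map f) n (fun i => (w i).map f) := by
  obtain ⟨h0, hn, harc⟩ := h
  exact ⟨by simp only []; rw [h0], by simp only []; rw [hn], fun i hi => adj_map hf (harc i hi)⟩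

/-- distance to an arbitrary relabeled base vertex via `phi`. -/
lemma cpDist_eq_phi_map {g : ℕ → ℕ} (hΔ : D ≤ Δ) (hf : AlphMap Δ f) (hg : AlphMap Δ g)
    (hgf : ∀ x, g (f x) = x) {u v : List ℕ} (hu : IsVtx Δ D u)
    (hfv : v.map f = List.range' 1 D) :
    cpDist (adjR Δ D 0) u v = phi D (u.map f) := by
  have hufv : IsVtx Δ D (u.map f) := vtx_map hf hu
  obtain ⟨w₀, hw₀⟩ := exists_walk_of_ok hΔ hufv (ok_phi hufv.1) (phi_le_D hufv.1)
  have hback := walk_map hg hw₀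
  have hgfu : (u.map f).map g = u := by rw [List.map_map]; exact List.map_id'' hgf u
  have hgfv : (List.range' 1 D).map g = v := by
    rw [← hfv, List.map_map]; exact List.map_id'' hgf v
  rw [hgfu, hgfv] at hback
  apply le_antisymm
  · exact Nat.sInf_le ⟨_, hback⟩
  · have hne : {n | ∃ w, IsWalk (adjR Δ D 0) u v n w}.Nonempty := ⟨_, _, hback⟩
    obtain ⟨w, hw⟩ := Nat.sInf_mem hne
    have := walk_map hf hw
    rw [hfv] at this
    exact phi_le_walk _ _ _ this

end Automorphism

section Sigma

/-- relabeling for `2 ≤ i ≤ D`: the cycle `1 ↦ i ↦ i-1 ↦ ... ↦ 2 ↦ 1`. -/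
def sigA (i : ℕ) : ℕ → ℕ := fun x => if x = 1 then i else if x ≤ i then x - 1 else x

def tauA (i : ℕ) : ℕ → ℕ := fun y => if y = i then 1 else if 1 ≤ y ∧ y < i then y + 1 else y

lemma tauA_sigA {i : ℕ} (hi : 2 ≤ i) : ∀ x, tauA i (sigA i x) = x := by
  intro x; simp only [sigA, tauA]; split_ifs <;> omega

lemma sigA_tauA {i : ℕ} (hi : 2 ≤ i) : ∀ y, sigA i (tauA i y) = y := by
  intro y; simp only [sigA, tauA]; split_ifs <;> omega

lemma sigA_inj {i : ℕ} (hi : 2 ≤ i) : Function.Injective (sigA i) :=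
  Function.LeftInverse.injective (tauA_sigA hi)

lemma sigA_alph {Δ i : ℕ} (hi : 2 ≤ i) (hiΔ : i ≤ Δ + 1) : AlphMap Δ (sigA i) := by
  constructor
  · intro x h1 h2; simp only [sigA]; split_ifs <;> omega
  · intro x y _ _ _ _ h; exact sigA_inj hi h

lemma tauA_alph {Δ i : ℕ} (hi : 2 ≤ i) (hiΔ : i ≤ Δ + 1) : AlphMap Δ (tauA i) := by
  constructor
  · intro x h1 h2; simp only [tauA]; split_ifs <;> omega
  · intro x y _ _ _ _ h
    have := congrArg (sigA i) h
    rwa [sigA_tauA hi, sigA_tauA hi] at this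

/-- relabeling for `D < i`: the cycle `1 ↦ i ↦ D ↦ D-1 ↦ ... ↦ 2 ↦ 1`. -/
def sigB (D i : ℕ) : ℕ → ℕ :=
  fun x => if x = 1 then i else if x ≤ D then x - 1 else if x = i then D else x

def tauB (D i : ℕ) : ℕ → ℕ :=
  fun y => if y = i then 1 else if 1 ≤ y ∧ y < D then y + 1 else if y = D then i else y

lemma tauB_sigB {D i : ℕ} (hD : 1 ≤ D) (hi : D < i) : ∀ x, tauB D i (sigB D i x) = x := by
  intro x; simp only [sigB, tauB]; split_ifs <;> omega

lemma sigB_tauB {D i : ℕ} (hD : 1 ≤ D) (hi : D < i) : ∀ y, sigB D i (tauB D i y) = y := by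
  intro y; simp only [sigB, tauB]; split_ifs <;> omega

lemma sigB_inj {D i : ℕ} (hD : 1 ≤ D) (hi : D < i) : Function.Injective (sigB D i) :=
  Function.LeftInverse.injective (tauB_sigB hD hi)

lemma sigB_alph {Δ D i : ℕ} (hD : 1 ≤ D) (hi : D < i) (hiΔ : i ≤ Δ + 1) :
    AlphMap Δ (sigB D i) := by
  constructor
  · intro x h1 h2; simp only [sigB]; split_ifs <;> omega
  · intro x y _ _ _ _ h; exact sigB_inj hD hi h

lemma tauB_alph {Δ D i : ℕ} (hD : 1 ≤ D) (hi : D < i) (hiΔ : i ≤ Δ + 1) :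
    AlphMap Δ (tauB D i) := by
  constructor
  · intro x h1 h2; simp only [tauB]; split_ifs <;> omega
  · intro x y _ _ _ _ h
    have := congrArg (sigB D i) h
    rwa [sigB_tauB hD hi, sigB_tauB hD hi] at this

/-- conjugation: an injective relabeling commutes with greedy runs. -/
lemma stp_map_conj (hf : Function.Injective f) (L : List ℕ) (c : ℕ) :
    stp (L.map f) (f c) = (stp L c).map f := by
  unfold stp
  by_cases hc : c ∈ L
  · rw [if_pos ((List.mem_map_of_injective hf).2 hc), if_pos hc, List.map_erase hf]
  · rw [if_neg (fun h => hc ((List.mem_map_of_injective hf).1 h)), if_neg hc,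
      List.map_dropLast]

lemma run_map_conj (hf : Function.Injective f) : ∀ (s : List ℕ) (L : List ℕ),
    run (L.map f) (s.map f) = (run L s).map f := by
  intro s
  induction s with
  | nil => intro L; rfl
  | cons c s ih =>
    intro L
    rw [List.map_cons, run_cons, run_cons, stp_map_conj hf, ih]

end Sigma


section FinalLemmas

lemma map_id_of {g : ℕ → ℕ} : ∀ {l : List ℕ}, (∀ x ∈ l, g x = x) → l.map g = l :=
  fun h => by
    induction ‹List ℕ› with
    | nil => rfl
    | cons a l ih => rw [List.map_cons, h a (by simp), ih (fun x hx => h x (by simp [hx]))]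

lemma map_range'_shift {g : ℕ → ℕ} : ∀ (n a : ℕ), 1 ≤ a →
    (∀ x, a ≤ x → x < a + n → g x = x - 1) →
    (List.range' a n).map g = List.range' (a - 1) n := by
  intro n
  induction n with
  | zero => intros; rfl
  | succ n ih =>
    intro a ha hg
    rw [List.range'_succ, List.map_cons, hg a le_rfl (by omega),
      ih (a+1) (by omega) (fun x h1 h2 => hg x (by omega) (by omega))]
    rw [List.range'_succ (s := a-1)]
    congr 2
    omega

lemma phi_eq_of {D t₀ : ℕ} {W : List ℕ} (h1 : ok D W t₀) (h2 : ∀ t, t < t₀ → ¬ ok D W t) :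
    phi D W = t₀ := by
  apply le_antisymm (Nat.sInf_le h1)
  by_contra h
  push_neg at h
  have hne : {t | ok D W t}.Nonempty := ⟨t₀, h1⟩
  exact h2 _ h (Nat.sInf_mem hne)

/-- a list headed by `D` has `phi = D - 1`. -/
lemma phi_head_D {D : ℕ} {M : List ℕ} (hD : 1 ≤ D) (hlen : M.length = D - 1) :
    phi D (D :: M) = D - 1 := by
  apply phi_eq_of
  · constructor
    · rw [G, run_cons_spectator _ _ (fun hm => by have := mem_sd.1 hm; omega)
        (by rw [length_sd, hlen]; omega)]
      have hz : (run M (sd (D-1) 1)).length = 0 := by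
        rw [length_run, length_sd, hlen]; omega
      rw [List.length_eq_zero_iff.1 hz, show D - (D - 1) = 1 by omega, List.range'_succ]
      congr 1
      omega
    · rcases Nat.eq_zero_or_pos (D - 1) with h | h
      · exact Or.inl h
      · exact Or.inr (by simp only [List.headI]; omega)
  · intro t ht ⟨hG, _⟩
    rw [G, run_cons_spectator _ _ (fun hm => by have := mem_sd.1 hm; omega)
      (by rw [length_sd, hlen]; omega)] at hG
    rw [show D - t = (D - t - 1) + 1 by omega, List.range'_succ] at hG
    injection hG with h1 _
    omega

lemma mapYiA {D i : ℕ} (h2 : 2 ≤ i) (hiD : i ≤ D) :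
    (Yi D i).map (sigA i) = List.range' 1 D := by
  rw [Yi, if_pos hiD, List.map_append, List.map_cons]
  rw [map_range'_shift (i-1) 2 (by omega) (fun x h1 h2 => by
    simp only [sigA]; rw [if_neg (by omega), if_pos (by omega)])]
  rw [show sigA i 1 = i from by simp [sigA]]
  rw [map_id_of (fun x hx => by
    have := List.mem_range'_1.1 hx
    simp only [sigA]; rw [if_neg (by omega), if_neg (by omega)])]
  have e1 : List.range' i (D - i + 1) = i :: List.range' (i+1) (D - i) := by
    rw [show D - i + 1 = (D - i) + 1 by rfl, List.range'_succ]
  have e2 := List.range'_append (s := 1) (m := i-1) (n := D - i + 1) (step := 1)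
  simp only [one_mul, Nat.mul_one] at e2
  rw [show 1 + (i - 1) = i by omega] at e2
  rw [show (2:ℕ) - 1 = 1 by rfl, ← e1, e2]
  congr 1
  omega

lemma mapYiB {D i : ℕ} (hD : 1 ≤ D) (hiD : D < i) :
    (Yi D i).map (sigB D i) = List.range' 1 D := by
  rw [Yi, if_neg (by omega), List.map_append, List.map_cons, List.map_nil]
  rw [map_range'_shift (D-1) 2 (by omega) (fun x h1 h2 => by
    simp only [sigB]; rw [if_neg (by omega), if_pos (by omega)])]
  rw [show sigB D i i = D from by simp only [sigB]; rw [if_neg (by omega), if_neg (by omega)]; simp]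
  rw [show (2:ℕ) - 1 = 1 by rfl]
  have := List.range'_1_concat (s := 1) (n := D-1)
  rw [show 1 + (D - 1) = D by omega] at this
  rw [← this]
  congr 1
  omega

lemma comp_vtx {Δ D i : ℕ} {X : List ℕ} (hX : IsVtx Δ D X) (hD : 1 ≤ D)
    (h1 : 1 ≤ i) (h2 : i ≤ Δ + 1) : IsVtx Δ D (comp i X) := by
  obtain ⟨hlen, hnd, hbnd⟩ := hX
  rw [comp]
  split_ifs with hmem
  · refine ⟨by simp [List.length_erase_of_mem hmem, hlen]; omega, ?_, ?_⟩
    · exact List.nodup_cons.2 ⟨hnd.not_mem_erase, (List.erase_sublist (a := i) (l := X)).nodup hnd⟩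
    · intro x hx
      rcases List.mem_cons.1 hx with rfl | hx
      · exact ⟨h1, h2⟩
      · exact hbnd x ((List.erase_sublist (a := i) (l := X)).subset hx)
  · refine ⟨by simp [List.length_dropLast, hlen]; omega, ?_, ?_⟩
    · exact List.nodup_cons.2 ⟨fun hm => hmem ((List.dropLast_sublist X).subset hm),
        (List.dropLast_sublist X).nodup hnd⟩
    · intro x hx
      rcases List.mem_cons.1 hx with rfl | hx
      · exact ⟨h1, h2⟩
      · exact hbnd x ((List.dropLast_sublist X).subset hx)

end FinalLemmas


section CaseLemmas

lemma comp_one_cons {i : ℕ} {T : List ℕ} (h2 : 2 ≤ i) (hTne : T ≠ []) :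
    comp i ((1:ℕ) :: T) = i :: 1 :: stp T i := by
  rw [comp, stp]
  by_cases hm : i ∈ T
  · rw [if_pos (by simp [hm]), if_pos hm,
      List.erase_cons_tail (by simp only [beq_iff_eq]; omega)]
  · rw [if_neg (by simp [hm]; omega), if_neg hm, List.dropLast_cons_of_ne_nil hTne]

lemma sigA_one {i : ℕ} (h2 : 2 ≤ i) : sigA i 1 = i := by simp [sigA]

lemma sigA_self {i : ℕ} (h2 : 2 ≤ i) : sigA i i = i - 1 := by
  simp only [sigA]; rw [if_neg (by omega), if_pos le_rfl]

lemma sigA_fix {i x : ℕ} (hi : 1 ≤ i) (hx : i < x) : sigA i x = x := by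
  simp only [sigA]; rw [if_neg (by omega), if_neg (by omega)]

lemma map_sigA_range'_high {i a n : ℕ} (hi : 1 ≤ i) (ha : i < a) :
    (List.range' a n).map (sigA i) = List.range' a n :=
  map_id_of (fun x hx => sigA_fix hi (by have := List.mem_range'_1.1 hx; omega))

lemma sched_mapA_low {i : ℕ} (h2 : 2 ≤ i) :
    (sd (i-1) 2).map (sigA i) = sd (i-2) 1 := by
  unfold sd
  rw [List.map_reverse]
  congr 1
  rw [show i - 1 + 1 - 2 = i - 2 by omega, show i - 2 + 1 - 1 = i - 2 by omega]
  rw [map_range'_shift (i-2) 2 (by omega) (fun x hx1 hx2 => by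
    simp only [sigA]; rw [if_neg (by omega), if_pos (by omega)])]

lemma sched_mapA_high {i t : ℕ} (h2 : 2 ≤ i) (hit : i ≤ t) :
    (sd t (i+1) ++ 1 :: sd i 2).map (sigA i) = sd t 1 := by
  rw [List.map_append, List.map_cons, sigA_one h2]
  rw [map_id_of (fun x hx => sigA_fix (by omega) (by have := mem_sd.1 hx; omega))]
  have : (sd i 2).map (sigA i) = sd (i-1) 1 := by
    unfold sd
    rw [List.map_reverse]
    congr 1
    rw [show i + 1 - 2 = i - 1 by omega, show i - 1 + 1 - 1 = i - 1 by omega]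
    rw [map_range'_shift (i-1) 2 (by omega) (fun x hx1 hx2 => by
      simp only [sigA]; rw [if_neg (by omega), if_pos (by omega)])]
  rw [this, ← sd_split_mid (le_refl 1) (by omega) hit]

variable {Δ D i k t : ℕ} {T : List ℕ}

lemma run_comp_low (h2 : 2 ≤ i) (hiD : i ≤ D) (hT : T.length = D - 1) :
    run (comp i ((1:ℕ) :: T)) (sd (i-1) 2) = i :: 1 :: run T (sd i 2) := by
  have hD2 : 2 ≤ D := by omega
  have hTne : T ≠ [] := by intro h; rw [h] at hT; simp at hT; omega
  have hR : (stp T i).length = D - 2 := by rw [length_stp, hT]; omega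
  rw [comp_one_cons h2 hTne]
  have hlen1 : (sd (i-1) 2).length = i - 2 := by rw [length_sd]; omega
  rw [show run (i :: 1 :: stp T i) (sd (i-1) 2) = i :: run ((1:ℕ) :: stp T i) (sd (i-1) 2)
    from run_cons_spectator _ _ (fun hm => by have := mem_sd.1 hm; omega)
    (by simp [hlen1, hR]; omega)]
  rw [show run ((1:ℕ) :: stp T i) (sd (i-1) 2) = 1 :: run (stp T i) (sd (i-1) 2)
    from run_cons_spectator _ _ (fun hm => by have := mem_sd.1 hm; omega)
    (by rw [hlen1, hR]; omega)]
  congr 2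
  rw [show sd i 2 = i :: sd (i-1) 2 from sd_cons (by omega) h2, run_cons,
    show stp T i = stp T i from rfl]

lemma run_comp_high (h2 : 2 ≤ i) (hiD : i ≤ D) (hit : i ≤ t) (htD : t ≤ D)
    (hT : T.length = D - 1) (hnd : ((1:ℕ) :: T).Nodup) :
    run (comp i ((1:ℕ) :: T)) (sd t (i+1) ++ 1 :: sd i 2) = run T (sd t 2) := by
  have hD2 : 2 ≤ D := by omega
  have hTne : T ≠ [] := by intro h; rw [h] at hT; simp at hT; omega
  have hndT : T.Nodup := (List.nodup_cons.1 hnd).2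
  have hR : (stp T i).length = D - 2 := by rw [length_stp, hT]; omega
  have hs1len : (sd t (i+1)).length = t - i := by rw [length_sd]; omega
  rw [comp_one_cons h2 hTne, run_append]
  rw [show run (i :: 1 :: stp T i) (sd t (i+1)) = i :: run ((1:ℕ) :: stp T i) (sd t (i+1))
    from run_cons_spectator _ _ (fun hm => by have := mem_sd.1 hm; omega)
    (by simp [hs1len, hR]; omega)]
  rw [show run ((1:ℕ) :: stp T i) (sd t (i+1)) = 1 :: run (stp T i) (sd t (i+1))
    from run_cons_spectator _ _ (fun hm => by have := mem_sd.1 hm; omega)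
    (by rw [hs1len, hR]; omega)]
  rw [run_cons, show stp (i :: 1 :: run (stp T i) (sd t (i+1))) 1
      = i :: run (stp T i) (sd t (i+1)) from by
    rw [stp, if_pos (by simp), List.erase_cons_tail (by simp only [beq_iff_eq]; omega),
      List.erase_cons_head]]
  rw [show sd i 2 = i :: sd (i-1) 2 from sd_cons (by omega) h2, run_cons,
    show stp (i :: run (stp T i) (sd t (i+1))) i = run (stp T i) (sd t (i+1)) from by
      rw [stp, if_pos (by simp), List.erase_cons_head]]
  rw [← run_append]
  have hsplit : sd t 2 = sd t (i+1) ++ i :: sd (i-1) 2 := sd_split_mid (by omega) h2 hit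
  rw [hsplit]
  by_cases hm : i ∈ T
  · rw [run_mid_erase _ _ _ hndT hm (fun hmm => by have := mem_sd.1 hmm; omega)]
    rw [show stp T i = T.erase i from by rw [stp, if_pos hm]]
  · rw [run_mid_not_mem hndT hm (fun hmm => by have := mem_sd.1 hmm; omega)]
    rw [show stp T i = T.dropLast from by rw [stp, if_neg hm]]

lemma Z_shape (h2 : 2 ≤ i) (hiD : i ≤ D) (hT : T.length = D - 1) :
    (comp i ((1:ℕ) :: T)).map (sigA i) = (i-1) :: i :: (stp T i).map (sigA i) := by
  have hTne : T ≠ [] := by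
    intro h; rw [h] at hT; simp at hT; omega
  rw [comp_one_cons h2 hTne, List.map_cons, List.map_cons, sigA_self h2, sigA_one h2]

lemma expand_range' {a n : ℕ} (ha : 1 ≤ a) :
    List.range' a (n + 2) = a :: (a+1) :: List.range' (a+2) n := by
  rw [show n + 2 = (n+1)+1 by rfl, List.range'_succ, List.range'_succ]

/-- case `k ≤ i ≤ D` : `phi Z = i - 2`. -/
lemma phi_case_ge (h2 : 2 ≤ i) (hki : k ≤ i) (hiD : i ≤ D) (hT : T.length = D - 1)
    (hnd : ((1:ℕ) :: T).Nodup)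
    (hGX : G ((1:ℕ) :: T) k = List.range' (k+1) (D - k)) :
    phi D ((comp i ((1:ℕ) :: T)).map (sigA i)) = i - 2 := by
  have hGXi : G ((1:ℕ) :: T) i = List.range' (i+1) (D - i) := G_mono hnd hGX i hki hiD
  have hrunTi : run T (sd i 2) = List.range' (i+1) (D - i) := by
    rw [← G_one_cons hT (by omega) hiD]; exact hGXi
  have hR : (stp T i).length = D - 2 := by rw [length_stp, hT]; omega
  apply phi_eq_of
  · constructor
    · rw [G, ← sched_mapA_low h2, run_map_conj (sigA_inj h2), run_comp_low h2 hiD hT,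
        hrunTi, List.map_cons, List.map_cons, sigA_self h2, sigA_one h2,
        map_sigA_range'_high (by omega) (by omega)]
      rw [show D - (i - 2) = (D - i) + 2 by omega, show i - 2 + 1 = i - 1 by omega,
        expand_range' (by omega), show i - 1 + 1 = i by omega,
        show i - 1 + 2 = i + 1 by omega]
    · rcases Nat.eq_zero_or_pos (i - 2) with h | h
      · exact Or.inl h
      · refine Or.inr ?_
        rw [Z_shape h2 hiD hT]
        simp only [List.headI]
        omega
  · intro u hu ⟨hGZ, _⟩
    rw [G, Z_shape h2 hiD hT, run_cons_spectator _ _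
      (fun hm => by have := mem_sd.1 hm; omega)
      (by rw [length_sd]; simp [hR]; omega)] at hGZ
    rw [show D - u = (D - u - 1) + 1 by omega, List.range'_succ] at hGZ
    injection hGZ with hh _
    omega

/-- case `2 ≤ i < k` : `phi Z = k`. -/
lemma phi_case_lt (h2 : 2 ≤ i) (hik : i < k) (hkD : k ≤ D) (hT : T.length = D - 1)
    (hnd : ((1:ℕ) :: T).Nodup)
    (hGX : G ((1:ℕ) :: T) k = List.range' (k+1) (D - k))
    (hmin : ∀ u, u < k → ¬ ok D ((1:ℕ) :: T) u) :
    phi D ((comp i ((1:ℕ) :: T)).map (sigA i)) = k := by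
  have hiD : i ≤ D := by omega
  have hR : (stp T i).length = D - 2 := by rw [length_stp, hT]; omega
  have hmapinj : Function.Injective (List.map (sigA i)) :=
    List.map_injective_iff.2 (sigA_inj h2)
  apply phi_eq_of
  · constructor
    · rw [G, ← sched_mapA_high h2 (by omega), run_map_conj (sigA_inj h2),
        run_comp_high h2 hiD (by omega) hkD hT hnd,
        ← G_one_cons hT (by omega) hkD, hGX, map_sigA_range'_high (by omega) (by omega)]
    · exact Or.inr (by rw [Z_shape h2 hiD hT]; simp only [List.headI]; omega)
  · intro u hu ⟨hGZ, hhd⟩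
    by_cases hu1 : u < i - 2
    · -- head mismatch
      rw [G, Z_shape h2 hiD hT, run_cons_spectator _ _
        (fun hm => by have := mem_sd.1 hm; omega)
        (by rw [length_sd]; simp [hR]; omega)] at hGZ
      rw [show D - u = (D - u - 1) + 1 by omega, List.range'_succ] at hGZ
      injection hGZ with hh _
      omega
    by_cases hu2 : u = i - 2
    · -- would give ok (X, i) with i < k
      subst hu2
      rw [G, ← sched_mapA_low h2, run_map_conj (sigA_inj h2),
        run_comp_low h2 hiD hT] at hGZ
      rw [show D - (i - 2) = (D - i) + 2 by omega,
        show i - 2 + 1 = i - 1 by omega, expand_range' (by omega),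
        show i - 1 + 1 = i by omega, show i - 1 + 2 = i + 1 by omega] at hGZ
      have : (i :: 1 :: run T (sd i 2)).map (sigA i)
          = (i :: 1 :: List.range' (i+1) (D-i)).map (sigA i) := by
        rw [hGZ, List.map_cons, List.map_cons, sigA_self h2, sigA_one h2,
          map_sigA_range'_high (by omega) (by omega)]
      have heq := hmapinj this
      injection heq with _ heq
      injection heq with _ heq
      have hokXi : ok D ((1:ℕ) :: T) i := by
        constructor
        · rw [G_one_cons hT (by omega) hiD]
          rw [show sd i 2 = i :: sd (i-1) 2 from sd_cons (by omega) h2, run_cons] at heq ⊢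
          exact heq
        · exact Or.inr (by simp only [List.headI]; omega)
      exact hmin i hik hokXi
    by_cases hu3 : u = i - 1
    · -- head condition fails
      rcases hhd with h0 | hne
      · omega
      · apply hne
        rw [Z_shape h2 hiD hT]
        simp only [List.headI]
        omega
    · -- i ≤ u < k : would give ok (X, u)
      have hiu : i ≤ u := by omega
      rw [G, ← sched_mapA_high h2 hiu, run_map_conj (sigA_inj h2),
        run_comp_high h2 hiD hiu (by omega) hT hnd] at hGZ
      have : (run T (sd u 2)).map (sigA i)
          = (List.range' (u+1) (D - u)).map (sigA i) := by
        rw [hGZ, map_sigA_range'_high (by omega) (by omega)]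
      have heq := hmapinj this
      have hokXu : ok D ((1:ℕ) :: T) u := by
        constructor
        · rw [G_one_cons hT (by omega) (by omega)]
          exact heq
        · exact Or.inr (by simp only [List.headI]; omega)
      exact hmin u hu hokXu

end CaseLemmas

end CPD


open CPD

/-- for a vertex `X` with `x_1 = 1`, `Y = 12⋯D` and `d(X,Y) = k`,
the distances `d(X_i, Y_i)` with `X_i = i ∘ X` are: `k` if `1 < i < k`; `k - 2`
if `i = k`; `i - 2` if `k < i ≤ D`; and `D - 1` if `i > D`. -/
theorem dist_Xi_Yi (Δ D k : ℕ) (hΔ : D ≤ Δ)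
    (X : List ℕ) (hX : IsVtx Δ D X) (hX1 : X.headI = 1)
    (hk : cpDist (adjR Δ D 0) X (List.range' 1 D) = k) :
    ∀ i, 2 ≤ i → i ≤ Δ + 1 →
      (i < k → cpDist (adjR Δ D 0) (comp i X) (Yi D i) = k) ∧
      (i = k → cpDist (adjR Δ D 0) (comp i X) (Yi D i) = k - 2) ∧
      (k < i → i ≤ D → cpDist (adjR Δ D 0) (comp i X) (Yi D i) = i - 2) ∧
      (D < i → cpDist (adjR Δ D 0) (comp i X) (Yi D i) = D - 1) := by
  intro i h2i hiΔ
  have hD1 : 1 ≤ D := by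
    by_contra h
    have hX0 : X = [] := List.length_eq_zero_iff.1 (by rw [hX.1]; omega)
    rw [hX0] at hX1
    simp at hX1
  obtain ⟨T, rfl⟩ : ∃ T, X = (1:ℕ) :: T := by
    cases X with
    | nil => simp at hX1
    | cons a T =>
      simp only [List.headI] at hX1
      exact ⟨T, by rw [hX1]⟩
  have hlen : ((1:ℕ) :: T).length = D := hX.1
  have hT : T.length = D - 1 := by simp at hlen; omega
  have hnd : ((1:ℕ) :: T).Nodup := hX.2.1
  have hphiX : phi D ((1:ℕ) :: T) = k := by rw [← dist_eq_phi hΔ hX]; exact hk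
  have hokX : ok D ((1:ℕ) :: T) k := hphiX ▸ ok_phi hlen
  have hGX := hokX.1
  have hkD : k ≤ D := hphiX ▸ phi_le_D hlen
  have hmin : ∀ u, u < k → ¬ ok D ((1:ℕ) :: T) u := by
    intro u hu hok
    have h1 : phi D ((1:ℕ) :: T) ≤ u := Nat.sInf_le hok
    omega
  by_cases hiD : i ≤ D
  · have hdist : cpDist (adjR Δ D 0) (comp i ((1:ℕ) :: T)) (Yi D i)
        = phi D ((comp i ((1:ℕ) :: T)).map (sigA i)) :=
      cpDist_eq_phi_map hΔ (sigA_alph h2i (by omega)) (tauA_alph h2i (by omega))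
        (tauA_sigA h2i) (comp_vtx hX hD1 (by omega) hiΔ) (mapYiA h2i hiD)
    refine ⟨?_, ?_, ?_, ?_⟩
    · intro hik
      rw [hdist, phi_case_lt h2i hik hkD hT hnd hGX hmin]
    · intro hik
      subst hik
      rw [hdist, phi_case_ge h2i le_rfl hiD hT hnd hGX]
    · intro hki _
      rw [hdist, phi_case_ge h2i (by omega) hiD hT hnd hGX]
    · intro hDi
      omega
  · push_neg at hiD
    have hdist : cpDist (adjR Δ D 0) (comp i ((1:ℕ) :: T)) (Yi D i)
        = phi D ((comp i ((1:ℕ) :: T)).map (sigB D i)) :=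
      cpDist_eq_phi_map hΔ (sigB_alph hD1 hiD hiΔ) (tauB_alph hD1 hiD hiΔ)
        (tauB_sigB hD1 hiD) (comp_vtx hX hD1 (by omega) hiΔ) (mapYiB hD1 hiD)
    obtain ⟨res, hres, hreslen⟩ :
        ∃ res, comp i ((1:ℕ) :: T) = i :: res ∧ res.length = D - 1 := by
      rw [comp]
      split_ifs with hm
      · exact ⟨_, rfl, by rw [List.length_erase_of_mem hm, hX.1]⟩
      · exact ⟨_, rfl, by rw [List.length_dropLast, hX.1]⟩
    have hmap : (comp i ((1:ℕ) :: T)).map (sigB D i) = D :: res.map (sigB D i) := by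
      rw [hres, List.map_cons, show sigB D i i = D from by
        simp only [sigB]; rw [if_neg (by omega), if_neg (by omega)]; simp]
    refine ⟨fun hik => by omega, fun hik => by omega, fun hki hiD2 => by omega, ?_⟩
    intro hDi
    rw [hdist, hmap, phi_head_D hD1 (by simp [hreslen])]
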